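/- Let X, Y be disjoint vertex sets in a finite graph G with no edge between X and Y. Among the minimum-size X–Y separators there is a unique one closest to X: i.e., there is a minimum X–Y separator S such that every minimum X–Y separator S' satisfies R(X,S) ⊆ R(X,S'). -/

import Mathlib

open SimpleGraph

/-- `b` is reachable from `a` by a walk avoiding `S`. -/
def ReachAvoid {W : Type} (G : SimpleGraph W) (S : Set W) (a b : W) : Prop :=
  ∃ p : G.Walk a b, ∀ x ∈ p.support, x ∉ S

/-- `R(X,S)`: the set of vertices reachable from `X` in `G - S`. -/
def RSet {W : Type} (G : SimpleGraph W) (X S : Set W) : Set W :=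
  {b | ∃ a ∈ X, ReachAvoid G S a b}

/-- `S` is an `X`–`Y` separator: disjoint from `X ∪ Y` and hitting every
`X`–`Y` path. -/
def IsSep {W : Type} (G : SimpleGraph W) (X Y S : Set W) : Prop :=
  (∀ s ∈ S, s ∉ X ∪ Y) ∧ ∀ x ∈ X, ∀ y ∈ Y, ¬ ReachAvoid G S x y

/-- Open neighborhood of a vertex set. -/
def NbhdSet {W : Type} (G : SimpleGraph W) (Z : Set W) : Set W :=
  {b | b ∉ Z ∧ ∃ a ∈ Z, G.Adj a b}

section Helpers

variable {W : Type} {G : SimpleGraph W}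

lemma mem_RSet_self {X S : Set W} (hXS : ∀ x ∈ X, x ∉ S) {x : W} (hx : x ∈ X) :
    x ∈ RSet G X S :=
  ⟨x, hx, Walk.nil, by simpa using hXS x hx⟩

lemma RSet_extend {X S : Set W} {b c : W} (hb : b ∈ RSet G X S) (h : G.Adj b c)
    (hc : c ∉ S) : c ∈ RSet G X S := by
  obtain ⟨a, ha, p, hp⟩ := hb
  refine ⟨a, ha, p.concat h, ?_⟩
  intro x hx
  rw [Walk.support_concat, List.mem_append] at hx
  rcases hx with hx | hx
  · exact hp x hx
  · simp at hx; subst hx; exact hc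

lemma exit_lemma {A : Set W} {a b : W} (p : G.Walk a b) (ha : a ∈ A) (hb : b ∉ A) :
    ∃ v ∈ p.support, v ∈ NbhdSet G A := by
  induction p with
  | nil => exact absurd ha hb
  | @cons u v w h q ih =>
    by_cases hv : v ∈ A
    · obtain ⟨z, hz, hzn⟩ := ih hv hb
      exact ⟨z, by simp [hz], hzn⟩
    · exact ⟨v, by simp, hv, u, ha, h⟩

lemma nbhd_RSet_subset {X S : Set W} : NbhdSet G (RSet G X S) ⊆ S := by
  rintro v ⟨hv, a, ha, hadj⟩
  by_contra hvS
  exact hv (RSet_extend ha hadj hvS)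

lemma RSet_nbhd_subset {X A : Set W} (hX : X ⊆ A) : RSet G X (NbhdSet G A) ⊆ A := by
  rintro b ⟨a, ha, p, hp⟩
  by_contra hb
  obtain ⟨v, hv, hvn⟩ := exit_lemma p (hX ha) hb
  exact hp v hv hvn

lemma sep_of_nbhd {X Y A : Set W} (hX : X ⊆ A) (hY : ∀ y ∈ Y, y ∉ A)
    (hadj : ∀ u ∈ A, ∀ y ∈ Y, ¬ G.Adj u y) : IsSep G X Y (NbhdSet G A) := by
  constructor
  · rintro s ⟨hs, a, ha, hadj'⟩ hmem
    rcases hmem with hsX | hsY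
    · exact hs (hX hsX)
    · exact hadj a ha s hsY hadj'
  · intro x hx y hy ⟨p, hp⟩
    exact hY y hy (RSet_nbhd_subset hX ⟨x, hx, p, hp⟩)

lemma RSet_Y_empty {X Y S : Set W} (hS : IsSep G X Y S) : ∀ y ∈ Y, y ∉ RSet G X S := by
  rintro y hy ⟨a, ha, h⟩
  exact hS.2 a ha y hy h

lemma adj_RSet_Y {X Y S : Set W} (hS : IsSep G X Y S) {u y : W}
    (hu : u ∈ RSet G X S) (hy : y ∈ Y) : ¬ G.Adj u y := by
  intro h
  have hyS : y ∉ S := fun hyS => hS.1 y hyS (Or.inr hy)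
  exact RSet_Y_empty hS y hy (RSet_extend hu h hyS)

lemma X_subset_RSet {X Y S : Set W} (hS : IsSep G X Y S) : X ⊆ RSet G X S :=
  fun _ hx => mem_RSet_self (fun z hz hzS => hS.1 z hzS (Or.inl hz)) hx

lemma ncard_eq_sum [Fintype W] (S : Set W) [DecidablePred (· ∈ S)] :
    S.ncard = ∑ v : W, (if v ∈ S then 1 else 0) := by
  rw [Set.ncard_eq_toFinset_card']
  rw [show S.toFinset = Finset.univ.filter (· ∈ S) by ext v; simp]
  exact Finset.card_filter _ _

lemma nbhd_submod [Fintype W] (G : SimpleGraph W) (A B : Set W) :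
    (NbhdSet G (A ∩ B)).ncard + (NbhdSet G (A ∪ B)).ncard ≤
      (NbhdSet G A).ncard + (NbhdSet G B).ncard := by
  classical
  have key : ∀ v : W,
      ((if v ∈ NbhdSet G (A ∩ B) then 1 else 0) + if v ∈ NbhdSet G (A ∪ B) then 1 else 0) ≤
      ((if v ∈ NbhdSet G A then 1 else 0) + if v ∈ NbhdSet G B then 1 else 0) := by
    intro v
    have hQ : v ∈ NbhdSet G (A ∪ B) → v ∈ NbhdSet G A ∨ v ∈ NbhdSet G B := by
      rintro ⟨hv, u, hu, hadj⟩
      simp only [Set.mem_union, not_or] at hv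
      rcases hu with hu | hu
      · exact Or.inl ⟨hv.1, u, hu, hadj⟩
      · exact Or.inr ⟨hv.2, u, hu, hadj⟩
    have hPQ : v ∈ NbhdSet G (A ∩ B) → v ∈ NbhdSet G (A ∪ B) →
        v ∈ NbhdSet G A ∧ v ∈ NbhdSet G B := by
      rintro ⟨_, u, hu, hadj⟩ ⟨hv, _⟩
      simp only [Set.mem_union, not_or] at hv
      exact ⟨⟨hv.1, u, hu.1, hadj⟩, ⟨hv.2, u, hu.2, hadj⟩⟩
    have hP : v ∈ NbhdSet G (A ∩ B) → v ∈ NbhdSet G A ∨ v ∈ NbhdSet G B := by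
      rintro ⟨hv, u, hu, hadj⟩
      by_cases hA : v ∈ A
      · exact Or.inr ⟨fun hB => hv ⟨hA, hB⟩, u, hu.2, hadj⟩
      · exact Or.inl ⟨hA, u, hu.1, hadj⟩
    by_cases h1 : v ∈ NbhdSet G (A ∩ B) <;>
      by_cases h2 : v ∈ NbhdSet G (A ∪ B) <;>
      by_cases h3 : v ∈ NbhdSet G A <;>
      by_cases h4 : v ∈ NbhdSet G B <;>
      simp_all
  calc (NbhdSet G (A ∩ B)).ncard + (NbhdSet G (A ∪ B)).ncard
      = ∑ v : W, ((if v ∈ NbhdSet G (A ∩ B) then 1 else 0) +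
          if v ∈ NbhdSet G (A ∪ B) then 1 else 0) := by
        rw [ncard_eq_sum, ncard_eq_sum, Finset.sum_add_distrib]
    _ ≤ ∑ v : W, ((if v ∈ NbhdSet G A then 1 else 0) +
          if v ∈ NbhdSet G B then 1 else 0) := Finset.sum_le_sum fun v _ => key v
    _ = (NbhdSet G A).ncard + (NbhdSet G B).ncard := by
        rw [ncard_eq_sum, ncard_eq_sum, Finset.sum_add_distrib]

end Helpers

theorem unique_closest_min_separator {W : Type} [Fintype W] [DecidableEq W]
    (G : SimpleGraph W) (X Y : Set W) (hdisj : Disjoint X Y)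
    (hnoedge : ∀ x ∈ X, ∀ y ∈ Y, ¬ G.Adj x y) :
    ∃! S : Set W, IsSep G X Y S ∧
      (∀ S' : Set W, IsSep G X Y S' → S.ncard ≤ S'.ncard) ∧
      (∀ S' : Set W, IsSep G X Y S' → S'.ncard = S.ncard →
        RSet G X S ⊆ RSet G X S') := by
  classical
  have hsepX : IsSep G X Y (NbhdSet G X) :=
    sep_of_nbhd subset_rfl (fun y hy => Set.disjoint_right.mp hdisj hy) hnoedge
  have hexn : ∃ n, ∃ S, IsSep G X Y S ∧ S.ncard = n := ⟨_, _, hsepX, rfl⟩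
  set k := Nat.find hexn with hk
  have hk_le : ∀ S', IsSep G X Y S' → k ≤ S'.ncard :=
    fun S' h => Nat.find_min' hexn ⟨S', h, rfl⟩
  have hexm : ∃ m, ∃ S, (IsSep G X Y S ∧ S.ncard = k) ∧ (RSet G X S).ncard = m := by
    obtain ⟨S₁, hS₁, h₁⟩ := Nat.find_spec hexn
    exact ⟨_, S₁, ⟨hS₁, h₁⟩, rfl⟩
  obtain ⟨S₀, ⟨hS₀, hS₀k⟩, hS₀m⟩ := Nat.find_spec hexm
  have hm_le : ∀ T, IsSep G X Y T → T.ncard = k →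
      (RSet G X S₀).ncard ≤ (RSet G X T).ncard := by
    intro T hT hTk
    rw [hS₀m]
    exact Nat.find_min' hexm ⟨T, ⟨hT, hTk⟩, rfl⟩
  -- every minimum separator is the neighborhood of its reachability set
  have hminrep : ∀ S, IsSep G X Y S → S.ncard = k → NbhdSet G (RSet G X S) = S := by
    intro S hS hSk
    have hsub : NbhdSet G (RSet G X S) ⊆ S := nbhd_RSet_subset
    have hsep' : IsSep G X Y (NbhdSet G (RSet G X S)) :=
      sep_of_nbhd (X_subset_RSet hS) (RSet_Y_empty hS)
        (fun u hu y hy => adj_RSet_Y hS hu hy)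
    refine Set.eq_of_subset_of_ncard_le hsub ?_ (Set.toFinite S)
    rw [hSk]
    exact hk_le _ hsep'
  have hclosest : ∀ T, IsSep G X Y T → T.ncard = k → RSet G X S₀ ⊆ RSet G X T := by
    intro T hT hTk
    set A := RSet G X S₀ with hA
    set B := RSet G X T with hB
    have hXA : X ⊆ A := X_subset_RSet hS₀
    have hXB : X ⊆ B := X_subset_RSet hT
    have hYA := RSet_Y_empty hS₀
    have hYB := RSet_Y_empty hT
    have hadjA : ∀ u ∈ A, ∀ y ∈ Y, ¬ G.Adj u y := fun u hu y hy => adj_RSet_Y hS₀ hu hy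
    have hadjB : ∀ u ∈ B, ∀ y ∈ Y, ¬ G.Adj u y := fun u hu y hy => adj_RSet_Y hT hu hy
    have hXAB : X ⊆ A ∩ B := fun x hx => ⟨hXA hx, hXB hx⟩
    have hsepC : IsSep G X Y (NbhdSet G (A ∩ B)) :=
      sep_of_nbhd hXAB (fun y hy h => hYA y hy h.1)
        (fun u hu y hy => hadjA u hu.1 y hy)
    have hsepD : IsSep G X Y (NbhdSet G (A ∪ B)) :=
      sep_of_nbhd (fun x hx => Or.inl (hXA hx))
        (fun y hy h => h.elim (hYA y hy) (hYB y hy))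
        (fun u hu y hy => hu.elim (fun h => hadjA u h y hy) (fun h => hadjB u h y hy))
    have h1 := hk_le _ hsepC
    have h2 := hk_le _ hsepD
    have h3 : (NbhdSet G A).ncard ≤ k := by
      rw [← hS₀k]
      exact Set.ncard_le_ncard nbhd_RSet_subset (Set.toFinite _)
    have h4 : (NbhdSet G B).ncard ≤ k := by
      rw [← hTk]
      exact Set.ncard_le_ncard nbhd_RSet_subset (Set.toFinite _)
    have hsm := nbhd_submod G A B
    have hCk : (NbhdSet G (A ∩ B)).ncard = k := by omega
    have h5 : RSet G X (NbhdSet G (A ∩ B)) ⊆ A ∩ B := RSet_nbhd_subset hXAB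
    have h6 : A.ncard ≤ (RSet G X (NbhdSet G (A ∩ B))).ncard := hm_le _ hsepC hCk
    have h7 : (RSet G X (NbhdSet G (A ∩ B))).ncard ≤ (A ∩ B).ncard :=
      Set.ncard_le_ncard h5 (Set.toFinite _)
    have heq : A ∩ B = A :=
      Set.eq_of_subset_of_ncard_le Set.inter_subset_left (by omega) (Set.toFinite _)
    intro b hb
    have : b ∈ A ∩ B := heq.symm ▸ hb
    exact this.2
  refine ⟨S₀, ⟨hS₀, fun S' h => hS₀k ▸ hk_le S' h,
      fun S' h hcard => hclosest S' h (by rw [hcard, hS₀k])⟩, ?_⟩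
  rintro S' ⟨h1, h2, h3⟩
  have hk' : S'.ncard = k :=
    le_antisymm (hS₀k ▸ h2 S₀ hS₀) (hk_le S' h1)
  have heq : RSet G X S' = RSet G X S₀ :=
    subset_antisymm (h3 S₀ hS₀ (by rw [hS₀k, hk'])) (hclosest S' h1 hk')
  rw [← hminrep S' h1 hk', heq, hminrep S₀ hS₀ hS₀k]
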